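/- arXiv:math/0608424 — 3 statements merged into one kernel-verified Lean document; each statement's English description precedes it below -/
import Mathlib

section
/- Let X = Y be a real Hilbert space with duality product given by the inner product. Then the Cauchy bipotential b(x,y) = ‖x‖·‖y‖ is a bipotential: it is convex and continuous in each variable, satisfies b(x,y) ≥ ⟨x,y⟩ for all x, y, and b(x,y) = ⟨x,y⟩ holds if and only if x = 0, or y = 0, or there exists λ > 0 with y = λx; moreover these equality conditions are equivalent to y ∈ ∂b(·,y)(x) and to x ∈ ∂b(x,·)(y). -/
open scoped InnerProductSpace

noncomputable section

variable {X Y : Type*} [AddCommGroup X] [Module ℝ X] [TopologicalSpace X]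
  [AddCommGroup Y] [Module ℝ Y] [TopologicalSpace Y]

/-- Convexity for `ℝ ∪ {+∞}`-valued (here `EReal`-valued) functions. -/
def EConvexOn {V : Type*} [AddCommGroup V] [Module ℝ V] (φ : V → EReal) : Prop :=
  ∀ u v : V, ∀ a b : ℝ, 0 ≤ a → 0 ≤ b → a + b = 1 →
    φ (a • u + b • v) ≤ (a : EReal) * φ u + (b : EReal) * φ v

/-- Fenchel conjugate `φ*(y) = sup_x (⟨x,y⟩ - φ(x))` with respect to a duality pairing `p`. -/
def Conj (p : X →ₗ[ℝ] Y →ₗ[ℝ] ℝ) (φ : X → EReal) (y : Y) : EReal :=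
  ⨆ x : X, ((p x y : ℝ) : EReal) - φ x

/-- Subdifferential of `φ : X → ℝ ∪ {+∞}` at `x`: the set of `u ∈ Y` with
`⟨z - x, u⟩ + φ(x) ≤ φ(z)` for all `z`. -/
def SubdiffX (p : X →ₗ[ℝ] Y →ₗ[ℝ] ℝ) (φ : X → EReal) (x : X) : Set Y :=
  {u : Y | ∀ z : X, ((p (z - x) u : ℝ) : EReal) + φ x ≤ φ z}

/-- Subdifferential of `ψ : Y → ℝ ∪ {+∞}` at `y`. -/
def SubdiffY (p : X →ₗ[ℝ] Y →ₗ[ℝ] ℝ) (ψ : Y → EReal) (y : Y) : Set X :=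
  {v : X | ∀ w : Y, ((p v (w - y) : ℝ) : EReal) + ψ y ≤ ψ w}

/-- Definition of a bipotential. -/
def IsBipotential (p : X →ₗ[ℝ] Y →ₗ[ℝ] ℝ) (b : X → Y → EReal) : Prop :=
  (∀ y, EConvexOn (fun x => b x y) ∧ LowerSemicontinuous (fun x => b x y)) ∧
  (∀ x, EConvexOn (fun y => b x y) ∧ LowerSemicontinuous (fun y => b x y)) ∧
  (∀ x y, ((p x y : ℝ) : EReal) ≤ b x y) ∧
  (∀ x y,
    (y ∈ SubdiffX p (fun x' => b x' y) x ↔ x ∈ SubdiffY p (fun y' => b x y') y) ∧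
    (x ∈ SubdiffY p (fun y' => b x y') y ↔ b x y = ((p x y : ℝ) : EReal)))

/-- Graph of a bipotential. -/
def MGraph (p : X →ₗ[ℝ] Y →ₗ[ℝ] ℝ) (b : X → Y → EReal) : Set (X × Y) :=
  {q : X × Y | b q.1 q.2 = ((p q.1 q.2 : ℝ) : EReal)}

/-- Graph `M(φ)` of the law associated to a potential `φ`. -/
def Mphi (p : X →ₗ[ℝ] Y →ₗ[ℝ] ℝ) (φ : X → EReal) : Set (X × Y) :=
  {q : X × Y | φ q.1 + Conj p φ q.2 = ((p q.1 q.2 : ℝ) : EReal)}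

/-- BB-graph: nonempty set whose slices are all convex and closed. -/
def IsBBGraph (M : Set (X × Y)) : Prop :=
  M.Nonempty ∧
  (∀ x : X, Convex ℝ {y : Y | (x, y) ∈ M} ∧ IsClosed {y : Y | (x, y) ∈ M}) ∧
  (∀ y : Y, Convex ℝ {x : X | (x, y) ∈ M} ∧ IsClosed {x : X | (x, y) ∈ M})

/-- Convex lagrangian cover of `M` indexed by a nonempty compact space `Λ`. -/
def IsCover (p : X →ₗ[ℝ] Y →ₗ[ℝ] ℝ) {Λ : Type*} [TopologicalSpace Λ]
    (M : Set (X × Y)) (φ : Λ → X → EReal) : Prop :=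
  CompactSpace Λ ∧ Nonempty Λ ∧
  (∀ l : Λ, EConvexOn (φ l) ∧ LowerSemicontinuous (φ l)) ∧
  (∀ x : X, LowerSemicontinuous (fun q : Λ × Y => φ q.1 x + Conj p (φ q.1) q.2)) ∧
  (∀ y : Y, LowerSemicontinuous (fun q : Λ × X => φ q.1 q.2 + Conj p (φ q.1) y)) ∧
  M = ⋃ l : Λ, Mphi p (φ l)

/-- Implicit convexity of a parametrized family. -/
def ImplicitlyConvex {Λ : Type*} {V : Type*} [AddCommGroup V] [Module ℝ V]
    (g : Λ → V → EReal) : Prop :=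
  ∀ (l₁ : Λ) (z₁ : V) (l₂ : Λ) (z₂ : V) (a b : ℝ), 0 ≤ a → 0 ≤ b → a + b = 1 →
    ∃ l : Λ, g l (a • z₁ + b • z₂) ≤ (a : EReal) * g l₁ z₁ + (b : EReal) * g l₂ z₂

lemma pairing_eq {H : Type*} [NormedAddCommGroup H] [InnerProductSpace ℝ H] (x y : H) :
    innerₗ H x y = ⟪x, y⟫_ℝ := by
  simp

lemma eq_iff {H : Type*} [NormedAddCommGroup H] [InnerProductSpace ℝ H] (x y : H) :
    ‖x‖ * ‖y‖ = ⟪x, y⟫_ℝ ↔ x = 0 ∨ y = 0 ∨ ∃ l : ℝ, 0 < l ∧ y = l • x := by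
  rcases eq_or_ne x 0 with rfl | hx
  · simp
  rcases eq_or_ne y 0 with rfl | hy
  · simp
  constructor
  · intro h
    have := (real_inner_div_norm_mul_norm_eq_one_iff x y).1 (by
      rw [← h]; field_simp [norm_ne_zero_iff.2 hx, norm_ne_zero_iff.2 hy])
    exact Or.inr (Or.inr this.2)
  · rintro (rfl | rfl | ⟨l, hl, rfl⟩)
    · simp at hx
    · simp at hy
    · rw [real_inner_smul_right, real_inner_self_eq_norm_mul_norm, norm_smul]
      simp [Real.norm_eq_abs, abs_of_pos hl]; ring

lemma cauchy_subX_iff {H : Type*} [NormedAddCommGroup H] [InnerProductSpace ℝ H]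
    (x y : H) :
    y ∈ SubdiffX (innerₗ H)
        (fun x' => ((‖x'‖ * ‖y‖ : ℝ) : EReal)) x ↔
      ((‖x‖ * ‖y‖ : ℝ) : EReal) = ((⟪x, y⟫_ℝ : ℝ) : EReal) := by
  simp only [SubdiffX, Set.mem_setOf_eq, pairing_eq, ← EReal.coe_add, EReal.coe_le_coe_iff,
    EReal.coe_eq_coe_iff]
  constructor
  · intro h
    have h0 := h 0
    simp only [zero_sub, inner_neg_left, norm_zero, zero_mul] at h0
    have h1 : ‖x‖ * ‖y‖ ≤ ⟪x, y⟫_ℝ := by linarith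
    exact le_antisymm h1 (real_inner_le_norm x y)
  · intro h z
    have : ⟪z - x, y⟫_ℝ = ⟪z, y⟫_ℝ - ⟪x, y⟫_ℝ := inner_sub_left z x y
    have h2 := real_inner_le_norm z y
    rw [this, ← h]; linarith

lemma cauchy_subY_iff {H : Type*} [NormedAddCommGroup H] [InnerProductSpace ℝ H]
    (x y : H) :
    x ∈ SubdiffY (innerₗ H)
        (fun y' => ((‖x‖ * ‖y'‖ : ℝ) : EReal)) y ↔
      ((‖x‖ * ‖y‖ : ℝ) : EReal) = ((⟪x, y⟫_ℝ : ℝ) : EReal) := by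
  simp only [SubdiffY, Set.mem_setOf_eq, pairing_eq, ← EReal.coe_add, EReal.coe_le_coe_iff,
    EReal.coe_eq_coe_iff]
  constructor
  · intro h
    have h0 := h 0
    simp only [zero_sub, inner_neg_right, norm_zero, mul_zero] at h0
    have h1 : ‖x‖ * ‖y‖ ≤ ⟪x, y⟫_ℝ := by linarith
    exact le_antisymm h1 (real_inner_le_norm x y)
  · intro h w
    have : ⟪x, w - y⟫_ℝ = ⟪x, w⟫_ℝ - ⟪x, y⟫_ℝ := inner_sub_right x w y
    have h2 := real_inner_le_norm x w
    rw [this, ← h]; linarith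

/-- The Cauchy bipotential b(x,y) = ‖x‖‖y‖ on a real Hilbert space is a bipotential,
is convex and continuous in each variable, and equality b(x,y) = ⟨x,y⟩ holds iff
x = 0, y = 0, or y = λx for some λ > 0. -/
theorem cauchy_isBipotential (H : Type*) [NormedAddCommGroup H]
    [InnerProductSpace ℝ H] [CompleteSpace H] :
    IsBipotential (innerₗ H)
      (fun x y => ((‖x‖ * ‖y‖ : ℝ) : EReal)) ∧
    (∀ y : H, Continuous fun x : H => ‖x‖ * ‖y‖) ∧
    (∀ x : H, Continuous fun y : H => ‖x‖ * ‖y‖) ∧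
    (∀ x y : H, ‖x‖ * ‖y‖ = ⟪x, y⟫_ℝ ↔
      x = 0 ∨ y = 0 ∨ ∃ l : ℝ, 0 < l ∧ y = l • x) := by
  have contX : ∀ y : H, Continuous fun x : H => ‖x‖ * ‖y‖ :=
    fun y => continuous_norm.mul continuous_const
  have contY : ∀ x : H, Continuous fun y : H => ‖x‖ * ‖y‖ :=
    fun x => continuous_const.mul continuous_norm
  refine ⟨⟨?_, ?_, ?_, ?_⟩, contX, contY, fun x y => eq_iff x y⟩
  · intro y
    constructor
    · intro u v a b ha hb hab
      simp only [← EReal.coe_mul, ← EReal.coe_add, EReal.coe_le_coe_iff]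
      have := norm_add_le_of_le (norm_smul_le a u) (norm_smul_le b v)
      have hy : 0 ≤ ‖y‖ := norm_nonneg y
      have h2 : ‖a • u + b • v‖ ≤ a * ‖u‖ + b * ‖v‖ := by
        simpa [Real.norm_eq_abs, abs_of_nonneg ha, abs_of_nonneg hb] using this
      nlinarith [mul_le_mul_of_nonneg_right h2 hy]
    · exact ((continuous_coe_real_ereal).comp (contX y)).lowerSemicontinuous
  · intro x
    constructor
    · intro u v a b ha hb hab
      simp only [← EReal.coe_mul, ← EReal.coe_add, EReal.coe_le_coe_iff]
      have := norm_add_le_of_le (norm_smul_le a u) (norm_smul_le b v)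
      have hx : 0 ≤ ‖x‖ := norm_nonneg x
      have h2 : ‖a • u + b • v‖ ≤ a * ‖u‖ + b * ‖v‖ := by
        simpa [Real.norm_eq_abs, abs_of_nonneg ha, abs_of_nonneg hb] using this
      nlinarith [mul_le_mul_of_nonneg_left h2 hx]
    · exact ((continuous_coe_real_ereal).comp (contY x)).lowerSemicontinuous
  · intro x y
    rw [pairing_eq, EReal.coe_le_coe_iff]
    exact real_inner_le_norm x y
  · intro x y
    have e : ((innerₗ H) x y : ℝ) = ⟪x, y⟫_ℝ := pairing_eq x y
    constructor
    · rw [cauchy_subX_iff, cauchy_subY_iff]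
    · rw [cauchy_subY_iff, e]
end
end

section
/- Let (φ_λ)_{λ∈Λ} be a convex lagrangian cover of a BB-graph M and b(x,y) = inf_{λ∈Λ} (φ_λ(x) + φ_λ*(y)). If b(x,y) = ⟨x,y⟩ then (x,y) ∈ M, i.e. there exists λ ∈ Λ with φ_λ(x) + φ_λ*(y) = ⟨x,y⟩. Moreover the infimum defining b(x,y) is always attained at some λ̄ ∈ Λ. -/
open scoped InnerProductSpace

noncomputable section

variable {X Y : Type*} [AddCommGroup X] [Module ℝ X] [TopologicalSpace X]
  [AddCommGroup Y] [Module ℝ Y] [TopologicalSpace Y]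

/-- A lower semicontinuous `EReal`-valued function on a nonempty compact space
attains its minimum. -/
lemma lsc_exists_min {Λ : Type*} [TopologicalSpace Λ] [CompactSpace Λ] [Nonempty Λ]
    (f : Λ → EReal) (hf : LowerSemicontinuous f) : ∃ l : Λ, ∀ l' : Λ, f l ≤ f l' := by
  by_contra h
  push_neg at h
  set a := ⨅ l, f l with ha_def
  have ha : ∀ l, a < f l := fun l => by
    obtain ⟨l', hl'⟩ := h l
    exact lt_of_le_of_lt (iInf_le _ l') hl'
  obtain ⟨t, ht⟩ := isCompact_univ.elim_finite_subcover
    (fun c : {c : EReal // a < c} => {l : Λ | c.1 < f l})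
    (fun c => hf.isOpen_preimage c.1)
    (fun l _ => by
      obtain ⟨c, hc1, hc2⟩ := exists_between (ha l)
      exact Set.mem_iUnion.2 ⟨⟨c, hc1⟩, hc2⟩)
  have htne : t.Nonempty := by
    have := ht (Set.mem_univ (Classical.arbitrary Λ))
    rw [Set.mem_iUnion₂] at this
    obtain ⟨c, hc, -⟩ := this
    exact ⟨c, hc⟩
  set c₀ := t.inf' htne (fun c => c.1) with hc₀
  have hac₀ : a < c₀ := (Finset.lt_inf'_iff htne).2 fun c _ => c.2
  have hle : ∀ l : Λ, c₀ ≤ f l := by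
    intro l
    have := ht (Set.mem_univ l)
    rw [Set.mem_iUnion₂] at this
    obtain ⟨c, hcm, hcl⟩ := this
    exact le_trans (Finset.inf'_le _ hcm) hcl.le
  exact absurd (le_iInf hle) (not_le.2 hac₀)

/-- If b(x,y) = ⟨x,y⟩ for the infimum b of a convex lagrangian cover then (x,y) ∈ M;
moreover the infimum is always attained. -/
theorem cover_inf_eq_implies_mem_and_attained (p : X →ₗ[ℝ] Y →ₗ[ℝ] ℝ)
    {Λ : Type*} [TopologicalSpace Λ]
    (M : Set (X × Y)) (hM : IsBBGraph M) (φ : Λ → X → EReal) (hcov : IsCover p M φ) :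
    (∀ (x : X) (y : Y),
      (⨅ l : Λ, (φ l x + Conj p (φ l) y)) = ((p x y : ℝ) : EReal) → (x, y) ∈ M) ∧
    (∀ (x : X) (y : Y), ∃ lbar : Λ,
      (⨅ l : Λ, (φ l x + Conj p (φ l) y)) = φ lbar x + Conj p (φ lbar) y) := by
  obtain ⟨hcomp, hne, -, hlscY, -, hMeq⟩ := hcov
  haveI := hcomp; haveI := hne
  -- For fixed x, y the map l ↦ φ l x + Conj p (φ l) y is lsc, hence attains its min.
  have key : ∀ (x : X) (y : Y), ∃ lbar : Λ,
      ∀ l : Λ, φ lbar x + Conj p (φ lbar) y ≤ φ l x + Conj p (φ l) y := by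
    intro x y
    have hlsc : LowerSemicontinuous (fun l : Λ => φ l x + Conj p (φ l) y) :=
      LowerSemicontinuous.comp (hlscY x) (continuous_id.prodMk continuous_const)
    exact lsc_exists_min _ hlsc
  have attain : ∀ (x : X) (y : Y), ∃ lbar : Λ,
      (⨅ l : Λ, (φ l x + Conj p (φ l) y)) = φ lbar x + Conj p (φ lbar) y := by
    intro x y
    obtain ⟨lbar, hlbar⟩ := key x y
    exact ⟨lbar, le_antisymm (iInf_le _ lbar) (le_iInf hlbar)⟩
  refine ⟨fun x y hxy => ?_, attain⟩
  obtain ⟨lbar, hlbar⟩ := attain x y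
  rw [hMeq]
  exact Set.mem_iUnion.2 ⟨lbar, by simpa [Mphi] using hlbar.symm.trans hxy⟩
end
end

section
/- Let φ: ℝ → ℝ be differentiable with φ' strictly increasing, and let N = {(x, −φ'(x)) : x ∈ ℝ} be the graph of −φ'. Then for any convex lower semicontinuous ψ: ℝ → ℝ ∪ {+∞}, the set M(ψ) = {(x,y) : ψ(x) + ψ*(y) = xy} is not contained in N unless M(ψ) has at most one element. Consequently N admits no convex lagrangian cover. -/
open scoped InnerProductSpace

noncomputable section

variable {X Y : Type*} [AddCommGroup X] [Module ℝ X] [TopologicalSpace X]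
  [AddCommGroup Y] [Module ℝ Y] [TopologicalSpace Y]

private lemma add_eq_coe' {a b : EReal} {r : ℝ} (h : a + b = (r:EReal)) :
    ∃ A B : ℝ, a = (A:EReal) ∧ b = (B:EReal) ∧ A + B = r := by
  induction a using EReal.rec with
  | bot => simp at h
  | coe A =>
    induction b using EReal.rec with
    | bot => simp at h
    | coe B => exact ⟨A, B, rfl, rfl, by exact_mod_cast h⟩
    | top => simp at h
  | top =>
    induction b using EReal.rec with
    | bot => simp at h
    | coe B => simp at h
    | top => simp at h

private lemma chord' (ψ : ℝ → EReal) (hc : EConvexOn ψ) {z₁ z₂ z₃ : ℝ} {A B C : ℝ}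
    (h12 : z₁ < z₂) (h23 : z₂ < z₃) (h1 : ψ z₁ = (A:EReal)) (h2 : ψ z₂ = (B:EReal))
    (h3 : ψ z₃ = (C:EReal)) :
    B * (z₃ - z₁) ≤ A * (z₃ - z₂) + C * (z₂ - z₁) := by
  have hpos : (0:ℝ) < z₃ - z₁ := by linarith
  set a : ℝ := (z₃ - z₂)/(z₃ - z₁) with ha
  set b : ℝ := (z₂ - z₁)/(z₃ - z₁) with hb
  have hcomb : a • z₁ + b • z₃ = z₂ := by
    simp only [smul_eq_mul, ha, hb]; field_simp; ring
  have h := hc z₁ z₃ a b (by apply div_nonneg <;> linarith)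
    (by apply div_nonneg <;> linarith) (by rw [ha, hb]; field_simp; ring)
  rw [hcomb, h1, h2, h3] at h
  have h' : B ≤ a * A + b * C := by exact_mod_cast h
  have := mul_le_mul_of_nonneg_right h' hpos.le
  calc B * (z₃ - z₁) ≤ (a * A + b * C) * (z₃ - z₁) := this
    _ = A * (z₃ - z₂) + C * (z₂ - z₁) := by rw [ha, hb]; field_simp

private lemma exists_subgradient' (ψ : ℝ → EReal) (hc : EConvexOn ψ)
    (hnb : ∀ z : ℝ, ψ z ≠ ⊥)
    {u m w : ℝ} (hum : u < m) (hmw : m < w) (hu : ψ u ≠ ⊤) (hw : ψ w ≠ ⊤) :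
    ψ m ≠ ⊤ ∧ ∃ s : ℝ, ∀ z : ℝ, ((s * (z - m) : ℝ):EReal) + ψ m ≤ ψ z := by
  set U := (ψ u).toReal with hU
  set W := (ψ w).toReal with hW
  have hu' : ψ u = (U:EReal) := (EReal.coe_toReal hu (hnb u)).symm
  have hw' : ψ w = (W:EReal) := (EReal.coe_toReal hw (hnb w)).symm
  have hmt : ψ m ≠ ⊤ := by
    have hwu : w - u ≠ 0 := sub_ne_zero.mpr (by linarith)
    have hcomb : ((w-m)/(w-u)) • u + ((m-u)/(w-u)) • w = m := by
      simp only [smul_eq_mul]; field_simp [hwu]; ring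
    have h := hc u w ((w-m)/(w-u)) ((m-u)/(w-u))
      (by apply div_nonneg <;> linarith) (by apply div_nonneg <;> linarith)
      (by rw [← add_div, show w - m + (m - u) = w - u by ring, div_self hwu])
    rw [hcomb, hu', hw'] at h
    intro htop; rw [htop] at h
    have : ((((w-m)/(w-u)) * U + ((m-u)/(w-u)) * W : ℝ) : EReal) < ⊤ := EReal.coe_lt_top _
    rw [EReal.coe_add, EReal.coe_mul, EReal.coe_mul] at this
    exact absurd (le_antisymm this.le h) this.ne
  refine ⟨hmt, ?_⟩
  set Mv := (ψ m).toReal with hMv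
  have hm' : ψ m = (Mv:EReal) := (EReal.coe_toReal hmt (hnb m)).symm
  set S : Set ℝ := {s : ℝ | ∃ z, z < m ∧ ψ z ≠ ⊤ ∧ s = (Mv - (ψ z).toReal)/(m - z)} with hS
  have hSne : S.Nonempty := ⟨(Mv - U)/(m - u), u, hum, hu, by rw [hU]⟩
  have hub : ∀ s ∈ S, s ≤ (W - Mv)/(w - m) := by
    rintro s ⟨z, hzm, hzt, rfl⟩
    have hz' : ψ z = ((ψ z).toReal : EReal) := (EReal.coe_toReal hzt (hnb z)).symm
    have hch := chord' ψ hc hzm hmw hz' hm' hw'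
    rw [div_le_div_iff₀ (by linarith) (by linarith)]
    nlinarith [hch]
  have hbdd : BddAbove S := ⟨_, hub⟩
  refine ⟨sSup S, fun z => ?_⟩
  rcases eq_or_ne (ψ z) ⊤ with hzt | hzt
  · rw [hzt]; exact le_top
  have hz' : ψ z = ((ψ z).toReal : EReal) := (EReal.coe_toReal hzt (hnb z)).symm
  set Z := (ψ z).toReal with hZ
  rw [hm', hz', ← EReal.coe_add, EReal.coe_le_coe_iff]
  rcases lt_trichotomy z m with hzm | hzm | hzm
  · have hin : (Mv - Z)/(m - z) ∈ S := ⟨z, hzm, hzt, rfl⟩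
    have hle : (Mv - Z)/(m - z) ≤ sSup S := le_csSup hbdd hin
    rw [div_le_iff₀ (by linarith)] at hle
    nlinarith [hle]
  · subst hzm; simp; exact le_of_eq (hMv.trans hZ.symm)
  · have hle : sSup S ≤ (Z - Mv)/(z - m) := by
      apply csSup_le hSne
      rintro s ⟨z', hz'm, hz't, rfl⟩
      have hzz' : ψ z' = ((ψ z').toReal : EReal) := (EReal.coe_toReal hz't (hnb z')).symm
      have hch := chord' ψ hc hz'm hzm hzz' hm' hz'
      rw [div_le_div_iff₀ (by linarith) (by linarith)]
      nlinarith [hch]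
    rw [le_div_iff₀ (by linarith)] at hle
    nlinarith [hle]

private lemma mphi_mono' (ψ : ℝ → EReal) {x₁ y₁ x₂ y₂ : ℝ}
    (h₁ : (x₁, y₁) ∈ Mphi (LinearMap.mul ℝ ℝ) ψ)
    (h₂ : (x₂, y₂) ∈ Mphi (LinearMap.mul ℝ ℝ) ψ) :
    0 ≤ (x₁ - x₂) * (y₁ - y₂) := by
  have e₁ : ψ x₁ + Conj (LinearMap.mul ℝ ℝ) ψ y₁ = ((x₁*y₁ : ℝ):EReal) := h₁
  have e₂ : ψ x₂ + Conj (LinearMap.mul ℝ ℝ) ψ y₂ = ((x₂*y₂ : ℝ):EReal) := h₂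
  obtain ⟨A₁, B₁, hA₁, hB₁, hs₁⟩ := add_eq_coe' e₁
  obtain ⟨A₂, B₂, hA₂, hB₂, hs₂⟩ := add_eq_coe' e₂
  have c₁ : ((x₂*y₁ : ℝ):EReal) - ψ x₂ ≤ Conj (LinearMap.mul ℝ ℝ) ψ y₁ :=
    le_iSup (fun x => (((LinearMap.mul ℝ ℝ) x y₁ : ℝ):EReal) - ψ x) x₂
  have c₂ : ((x₁*y₂ : ℝ):EReal) - ψ x₁ ≤ Conj (LinearMap.mul ℝ ℝ) ψ y₂ :=
    le_iSup (fun x => (((LinearMap.mul ℝ ℝ) x y₂ : ℝ):EReal) - ψ x) x₁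
  rw [hA₂, hB₁, ← EReal.coe_sub, EReal.coe_le_coe_iff] at c₁
  rw [hA₁, hB₂, ← EReal.coe_sub, EReal.coe_le_coe_iff] at c₂
  nlinarith [c₁, c₂, hs₁, hs₂]

private lemma second_point' (ψ : ℝ → EReal) (hc : EConvexOn ψ) {x₀ y₀ : ℝ}
    (h₀ : (x₀, y₀) ∈ Mphi (LinearMap.mul ℝ ℝ) ψ) :
    ∃ q ∈ Mphi (LinearMap.mul ℝ ℝ) ψ, q ≠ (x₀, y₀) := by
  have e₀ : ψ x₀ + Conj (LinearMap.mul ℝ ℝ) ψ y₀ = ((x₀*y₀ : ℝ):EReal) := h₀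
  obtain ⟨A₀, B₀, hA₀, hB₀, hs₀⟩ := add_eq_coe' e₀
  -- lower bound: ψ never ⊥
  have hlow : ∀ z : ℝ, ((z * y₀ - B₀ : ℝ):EReal) ≤ ψ z := by
    intro z
    have c : ((z*y₀ : ℝ):EReal) - ψ z ≤ Conj (LinearMap.mul ℝ ℝ) ψ y₀ :=
      le_iSup (fun x => (((LinearMap.mul ℝ ℝ) x y₀ : ℝ):EReal) - ψ x) z
    rw [hB₀] at c
    rcases eq_or_ne (ψ z) ⊤ with ht | ht
    · rw [ht]; exact le_top
    rcases eq_or_ne (ψ z) ⊥ with hb | hb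
    · exfalso
      rw [hb] at c
      have ctop : ((z*y₀ : ℝ):EReal) - ⊥ = ⊤ := rfl
      rw [ctop, top_le_iff] at c
      exact EReal.coe_ne_top B₀ c
    have hz : ψ z = ((ψ z).toReal : EReal) := (EReal.coe_toReal ht hb).symm
    rw [hz, ← EReal.coe_sub, EReal.coe_le_coe_iff] at c
    rw [hz, EReal.coe_le_coe_iff]; linarith
  have hnb : ∀ z : ℝ, ψ z ≠ ⊥ := fun z hb => by
    have := hlow z; rw [hb, le_bot_iff] at this; exact EReal.coe_ne_bot _ this
  by_cases hA : ∀ x : ℝ, x ≠ x₀ → ψ x = ⊤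
  · -- vertical line: (x₀, y₀ + 1) is also in M
    refine ⟨(x₀, y₀ + 1), ?_, by simp⟩
    have hconj : Conj (LinearMap.mul ℝ ℝ) ψ (y₀ + 1) = ((x₀*(y₀+1) - A₀ : ℝ):EReal) := by
      apply le_antisymm
      · apply iSup_le; intro x
        show ((x*(y₀+1) : ℝ):EReal) - ψ x ≤ _
        rcases eq_or_ne x x₀ with rfl | hx
        · rw [hA₀, ← EReal.coe_sub]
        · rw [hA x hx]
          exact bot_le
      · have := le_iSup (fun x => (((LinearMap.mul ℝ ℝ) x (y₀+1) : ℝ):EReal) - ψ x) x₀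
        rwa [hA₀, ← EReal.coe_sub] at this
    show ψ x₀ + Conj (LinearMap.mul ℝ ℝ) ψ (y₀+1) = ((x₀*(y₀+1) : ℝ):EReal)
    rw [hA₀, hconj, ← EReal.coe_add]
    norm_num
  · push_neg at hA
    obtain ⟨x₁, hx₁, ht₁⟩ := hA
    set u := min x₀ x₁ with hu
    set w := max x₀ x₁ with hw
    set m := (x₀ + x₁)/2 with hm
    have hx₀t : ψ x₀ ≠ ⊤ := by rw [hA₀]; exact EReal.coe_ne_top A₀
    have hum : u < m ∧ m < w := by
      rcases lt_or_gt_of_ne hx₁ with h | h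
      · constructor
        · rw [hu, min_eq_right h.le, hm]; linarith
        · rw [hw, max_eq_left h.le, hm]; linarith
      · constructor
        · rw [hu, min_eq_left h.le, hm]; linarith
        · rw [hw, max_eq_right h.le, hm]; linarith
    have hut : ψ u ≠ ⊤ := by
      rcases min_cases x₀ x₁ with ⟨h, _⟩ | ⟨h, _⟩ <;> rw [hu, h]
      exacts [hx₀t, ht₁]
    have hwt : ψ w ≠ ⊤ := by
      rcases max_cases x₀ x₁ with ⟨h, _⟩ | ⟨h, _⟩ <;> rw [hw, h]
      exacts [hx₀t, ht₁]
    obtain ⟨hmt, s, hsub⟩ := exists_subgradient' ψ hc hnb hum.1 hum.2 hut hwt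
    set Mv := (ψ m).toReal with hMv
    have hm' : ψ m = (Mv:EReal) := (EReal.coe_toReal hmt (hnb m)).symm
    refine ⟨(m, s), ?_, ?_⟩
    · have hconj : Conj (LinearMap.mul ℝ ℝ) ψ s = ((m*s - Mv : ℝ):EReal) := by
        apply le_antisymm
        · apply iSup_le; intro z
          have hsz := hsub z
          show ((z*s : ℝ):EReal) - ψ z ≤ _
          rcases eq_or_ne (ψ z) ⊤ with ht | ht
          · rw [ht]; exact bot_le
          have hz : ψ z = ((ψ z).toReal : EReal) := (EReal.coe_toReal ht (hnb z)).symm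
          rw [hm', hz, ← EReal.coe_add, EReal.coe_le_coe_iff] at hsz
          rw [hz, ← EReal.coe_sub, EReal.coe_le_coe_iff]
          nlinarith [hsz]
        · have := le_iSup (fun x => (((LinearMap.mul ℝ ℝ) x s : ℝ):EReal) - ψ x) m
          rwa [hm', ← EReal.coe_sub] at this
      show ψ m + Conj (LinearMap.mul ℝ ℝ) ψ s = ((m*s : ℝ):EReal)
      rw [hm', hconj, ← EReal.coe_add]
      norm_num
    · intro hq
      have : m = x₀ := congrArg Prod.fst hq
      rw [hm] at this; apply hx₁; linarith

/-- The graph of -φ' for φ' strictly increasing contains no M(ψ) with more than one point,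
hence admits no convex lagrangian cover. -/
theorem graph_neg_deriv_no_cover (φ : ℝ → ℝ) (hd : Differentiable ℝ φ)
    (hmono : StrictMono (deriv φ)) :
    (∀ ψ : ℝ → EReal, EConvexOn ψ → LowerSemicontinuous ψ →
      Mphi (LinearMap.mul ℝ ℝ) ψ ⊆ {q : ℝ × ℝ | q.2 = -(deriv φ q.1)} →
      (Mphi (LinearMap.mul ℝ ℝ) ψ).Subsingleton) ∧
    ¬ ∃ (Λ : Type) (instΛ : TopologicalSpace Λ) (φfam : Λ → ℝ → EReal),
        @IsCover ℝ ℝ _ _ _ _ _ _ (LinearMap.mul ℝ ℝ) Λ instΛ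
          {q : ℝ × ℝ | q.2 = -(deriv φ q.1)} φfam := by
  have part1 : ∀ ψ : ℝ → EReal,
      Mphi (LinearMap.mul ℝ ℝ) ψ ⊆ {q : ℝ × ℝ | q.2 = -(deriv φ q.1)} →
      (Mphi (LinearMap.mul ℝ ℝ) ψ).Subsingleton := by
    intro ψ hsub q₁ h₁ q₂ h₂
    obtain ⟨x₁, y₁⟩ := q₁
    obtain ⟨x₂, y₂⟩ := q₂
    have hy₁ : y₁ = -(deriv φ x₁) := hsub h₁
    have hy₂ : y₂ = -(deriv φ x₂) := hsub h₂
    have hmon := mphi_mono' ψ h₁ h₂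
    have hx : x₁ = x₂ := by
      by_contra hne
      rcases lt_or_gt_of_ne hne with h | h
      · have := hmono h; nlinarith [hmon]
      · have := hmono h; nlinarith [hmon]
    subst hx
    rw [hy₁, hy₂]
  refine ⟨fun ψ hc _ hsub => part1 ψ hsub, ?_⟩
  rintro ⟨Λ, instΛ, φfam, hcov⟩
  obtain ⟨_, _, hconv, _, _, hN⟩ := hcov
  have hq₀ : ((0 : ℝ), -(deriv φ 0)) ∈ {q : ℝ × ℝ | q.2 = -(deriv φ q.1)} := rfl
  rw [hN] at hq₀
  obtain ⟨l, hl⟩ := Set.mem_iUnion.mp hq₀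
  have hsub : Mphi (LinearMap.mul ℝ ℝ) (φfam l) ⊆ {q : ℝ × ℝ | q.2 = -(deriv φ q.1)} := by
    rw [hN]; exact Set.subset_iUnion (fun l => Mphi (LinearMap.mul ℝ ℝ) (φfam l)) l
  have hss := part1 (φfam l) hsub
  obtain ⟨q, hq, hqne⟩ := second_point' (φfam l) (hconv l).1 hl
  exact hqne (hss hq hl)
end
end
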